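/- arXiv:1212.4401 — 3 statements merged into one kernel-verified Lean document; each statement's English description precedes it below -/
import Mathlib

section
/- The angle arctan(1/2) is an irrational multiple of 2π; that is, there is no rational number q with arctan(1/2) = 2πq. -/
open Complex Real

lemma gauss_pow_invariant (n : ℕ) :
    (((⟨2,1⟩ : GaussianInt) ^ (n+1)).re : ZMod 5) = 2 * (((⟨2,1⟩ : GaussianInt) ^ (n+1)).im : ZMod 5) ∧
    (((⟨2,1⟩ : GaussianInt) ^ (n+1)).im : ZMod 5) ^ 2 = 1 := by
  have h5 : (5 : ZMod 5) = 0 := rfl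
  induction n with
  | zero => simp
  | succ n ih =>
    obtain ⟨h1, h2⟩ := ih
    set a : ZMod 5 := (((⟨2,1⟩ : GaussianInt) ^ (n+1)).re : ZMod 5) with ha
    set b : ZMod 5 := (((⟨2,1⟩ : GaussianInt) ^ (n+1)).im : ZMod 5) with hb
    rw [pow_succ, Zsqrtd.re_mul, Zsqrtd.im_mul]
    push_cast
    rw [← ha, ← hb]
    constructor
    · linear_combination (-b) * h5
    · linear_combination (a + 6*b) * h1 + 16 * h2 + 3 * h5

/-- The angle `arctan (1/2)` is an irrational multiple of `2π`: there is no rational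
number `q` with `arctan (1/2) = 2πq`. -/
theorem arctan_half_not_rat_mul_two_pi :
    ¬ ∃ q : ℚ, Real.arctan (1 / 2) = 2 * Real.pi * (q : ℝ) := by
  rintro ⟨q, hq⟩
  set θ := Real.arctan (1/2) with hθdef
  have h5pos : (0:ℝ) < Real.sqrt 5 := Real.sqrt_pos.2 (by norm_num)
  have h5ne : ((Real.sqrt 5 : ℝ) : ℂ) ≠ 0 := by
    simpa using h5pos.ne'
  have hs5 : Real.sqrt (1 + (1/2:ℝ)^2) = Real.sqrt 5 / 2 := by
    rw [show (1 + (1/2:ℝ)^2) = (Real.sqrt 5 / 2)^2 by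
      have h := Real.sq_sqrt (by norm_num : (0:ℝ) ≤ 5); nlinarith [h]]
    exact Real.sqrt_sq (by positivity)
  have hexp : Complex.exp (θ * Complex.I) = (2 + Complex.I) / (Real.sqrt 5 : ℂ) := by
    rw [Complex.exp_mul_I, ← Complex.ofReal_cos, ← Complex.ofReal_sin,
      Real.cos_arctan, Real.sin_arctan, hs5]
    have h2 : (Real.sqrt 5 : ℝ) ≠ 0 := h5pos.ne'
    field_simp
    push_cast
    field_simp
  have hkey : (2 + Complex.I) = (Real.sqrt 5 : ℂ) * Complex.exp (θ * Complex.I) := by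
    rw [hexp]; field_simp
  have hnq : ((q.den : ℝ)) * (2 * Real.pi * (q:ℝ)) = (q.num:ℝ) * (2 * Real.pi) := by
    have : ((q * q.den : ℚ) : ℝ) = ((q.num : ℚ) : ℝ) := by
      rw [Rat.mul_den_eq_num]
    push_cast at this
    linear_combination 2 * Real.pi * this
  have hpow : (2 + Complex.I) ^ q.den = ((Real.sqrt 5 : ℝ) : ℂ) ^ q.den := by
    rw [hkey, mul_pow, ← Complex.exp_nat_mul]
    have : (q.den : ℂ) * (θ * Complex.I) = (q.num : ℂ) * (2 * Real.pi * Complex.I) := by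
      rw [hq]
      have := hnq
      push_cast
      rw [show ((q.den:ℂ)) * (2 * (Real.pi:ℂ) * (q:ℂ) * Complex.I)
          = (((q.den : ℝ)) * (2 * Real.pi * (q:ℝ)) : ℝ) * Complex.I by push_cast; ring,
        this]
      push_cast; ring
    rw [this, Complex.exp_int_mul_two_pi_mul_I, mul_one]
  -- Gaussian integers
  have hzc : (((⟨2,1⟩ : GaussianInt) ^ q.den : GaussianInt) : ℂ) = (2 + Complex.I) ^ q.den := by
    rw [map_pow, GaussianInt.toComplex_def']
    push_cast
    ring
  have him : ((((⟨2,1⟩ : GaussianInt) ^ q.den).im : ℤ) : ℝ) = 0 := by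
    rw [GaussianInt.intCast_im, hzc, hpow, ← Complex.ofReal_pow, Complex.ofReal_im]
  have himZ : ((⟨2,1⟩ : GaussianInt) ^ q.den).im = 0 := by exact_mod_cast him
  obtain ⟨k, hk⟩ := Nat.exists_eq_succ_of_ne_zero q.den_nz
  have hinv := (gauss_pow_invariant k).2
  rw [show k + 1 = q.den from hk.symm, himZ] at hinv
  simp at hinv
  exact absurd hinv (by decide)
end

section
/- Let M be the 5×5 integer matrix with rows (25,0,0,0,0), (0,3,0,0,0), (0,0,3,0,0), (15300,75,-450,1,0), (5400,75,-450,0,1), and let N ⊆ ℤ⁵ be the subgroup generated by the eigenvectors (2,0,0,1275,450), (0,6,1,0,0), (0,2,0,75,75). Then M maps N into N, and the induced map on the quotient ℤ⁵/N is the identity. -/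
/-- The 5×5 integer matrix arising from the Pinwheel substitution on `H²`. -/
def pinwheelM : Matrix (Fin 5) (Fin 5) ℤ :=
  !![25, 0, 0, 0, 0;
     0, 3, 0, 0, 0;
     0, 0, 3, 0, 0;
     15300, 75, -450, 1, 0;
     5400, 75, -450, 0, 1]

/-- The subgroup of `ℤ⁵` generated by the three eigenvectors of `pinwheelM`. -/
def eigenSubgroup : AddSubgroup (Fin 5 → ℤ) :=
  AddSubgroup.closure {![2, 0, 0, 1275, 450], ![0, 6, 1, 0, 0], ![0, 2, 0, 75, 75]}

lemma key (v : Fin 5 → ℤ) : pinwheelM.mulVec v - v ∈ eigenSubgroup := by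
  have h1 : ![2, 0, 0, 1275, 450] ∈ eigenSubgroup :=
    AddSubgroup.subset_closure (by simp)
  have h2 : ![0, 6, 1, 0, 0] ∈ eigenSubgroup :=
    AddSubgroup.subset_closure (by simp)
  have h3 : ![0, 2, 0, 75, 75] ∈ eigenSubgroup :=
    AddSubgroup.subset_closure (by simp)
  have heq : pinwheelM.mulVec v - v =
      (12 * v 0) • ![2, 0, 0, 1275, 450] + (2 * v 2) • ![0, 6, 1, 0, 0] +
        (v 1 - 6 * v 2) • ![0, 2, 0, 75, 75] := by
    funext i
    fin_cases i <;>
      simp [pinwheelM, Matrix.mulVec, dotProduct, Fin.sum_univ_five] <;> ring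
  rw [heq]
  exact add_mem (add_mem (AddSubgroup.zsmul_mem _ h1 _) (AddSubgroup.zsmul_mem _ h2 _))
    (AddSubgroup.zsmul_mem _ h3 _)

/-- `pinwheelM` maps `N` into `N`, and the induced map on the quotient `ℤ⁵/N`
is the identity. -/
theorem pinwheelM_maps_eigenSubgroup_and_induces_id :
    (∀ v ∈ eigenSubgroup, pinwheelM.mulVec v ∈ eigenSubgroup) ∧
    (∀ v : Fin 5 → ℤ,
      (QuotientAddGroup.mk (pinwheelM.mulVec v) : (Fin 5 → ℤ) ⧸ eigenSubgroup) =
        QuotientAddGroup.mk v) := by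
  constructor
  · intro v hv
    have := add_mem (key v) hv
    simpa using this
  · intro v
    rw [QuotientAddGroup.eq_iff_sub_mem]
    exact key v
end

section
/- Let M be the 5×5 integer matrix with rows (25,0,0,0,0), (0,3,0,0,0), (0,0,3,0,0), (15300,75,-450,1,0), (5400,75,-450,0,1). The direct limit of the system ℤ⁵ → ℤ⁵ → ⋯ with all connecting maps equal to M is isomorphic (as an abelian group) to ℤ[1/25] ⊕ ℤ[1/3]² ⊕ ℤ². -/
/-- The subgroup of `ℚ` consisting of rationals whose denominator is a power of `p`. -/
def zOneOver (p : ℕ) (hp : 0 < p) : AddSubgroup ℚ where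
  carrier := {q | ∃ (a : ℤ) (n : ℕ), q = a / (p : ℚ) ^ n}
  zero_mem' := ⟨0, 0, by simp⟩
  add_mem' := by
    rintro x y ⟨a, n, rfl⟩ ⟨b, m, rfl⟩
    refine ⟨a * (p : ℤ) ^ m + b * (p : ℤ) ^ n, n + m, ?_⟩
    have h : (p : ℚ) ≠ 0 := by positivity
    have h1 : (p : ℚ) ^ n ≠ 0 := pow_ne_zero _ h
    have h2 : (p : ℚ) ^ m ≠ 0 := pow_ne_zero _ h
    push_cast
    rw [div_add_div _ _ h1 h2, ← pow_add]
    ring_nf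
  neg_mem' := by
    rintro x ⟨a, n, rfl⟩
    exact ⟨-a, n, by push_cast; ring⟩

/-- The directed system over `ℕ` obtained by iterating a fixed endomorphism `A`. -/
def iterMap {G : Type*} [AddCommGroup G] (A : AddMonoid.End G) : ∀ i j : ℕ, i ≤ j → G →+ G :=
  fun i j _ => A ^ (j - i)

instance iterMap.directedSystem {G : Type*} [AddCommGroup G] (A : AddMonoid.End G) :
    DirectedSystem (fun _ : ℕ => G) (fun i j h => iterMap A i j h) where
  map_self := by
    intro i x
    show (A ^ (i - i)) x = x
    simp
  map_map := by
    intro k j i hij hjk x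
    have h : (k - j) + (j - i) = k - i := by omega
    calc (A ^ (k - j)) ((A ^ (j - i)) x) = ((A ^ (k - j)) * (A ^ (j - i))) x := rfl
      _ = (A ^ (k - i)) x := by rw [← pow_add, h]

abbrev Amap : AddMonoid.End (Fin 5 → ℤ) := (Matrix.mulVecLin pinwheelM).toAddMonoidHom

lemma Amap_apply (x : Fin 5 → ℤ) :
    Amap x = ![25 * x 0, 3 * x 1, 3 * x 2,
      15300 * x 0 + 75 * x 1 - 450 * x 2 + x 3,
      5400 * x 0 + 75 * x 1 - 450 * x 2 + x 4] := by
  show pinwheelM.mulVec x = _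
  funext i
  fin_cases i <;>
    simp [pinwheelM, Matrix.mulVecLin_apply, Matrix.mulVec, dotProduct,
      Fin.sum_univ_five] <;> ring

def k25 (m : ℕ) : ℤ := (1 - 825 * 25 ^ m) / 2
def k3 (m : ℕ) : ℤ := (1 - 75 * 3 ^ m) / 2

lemma k25_spec (m : ℕ) : 2 * k25 m = 1 - 825 * 25 ^ m := by
  have h : Odd ((825 : ℤ) * 25 ^ m) :=
    (by decide : Odd (825:ℤ)).mul ((by decide : Odd (25:ℤ)).pow)
  exact Int.two_mul_ediv_two_of_even ((by decide : Odd (1:ℤ)).sub_odd h)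

lemma k3_spec (m : ℕ) : 2 * k3 m = 1 - 75 * 3 ^ m := by
  have h : Odd ((75 : ℤ) * 3 ^ m) :=
    (by decide : Odd (75:ℤ)).mul ((by decide : Odd (3:ℤ)).pow)
  exact Int.two_mul_ediv_two_of_even ((by decide : Odd (1:ℤ)).sub_odd h)

lemma k25q (m : ℕ) : (k25 m : ℚ) = (1 - 825 * 25 ^ m) / 2 := by
  have h : ((2 * k25 m : ℤ) : ℚ) = ((1 - 825 * 25 ^ m : ℤ) : ℚ) := by rw [k25_spec m]
  push_cast at h
  linarith

lemma k3q (m : ℕ) : (k3 m : ℚ) = (1 - 75 * 3 ^ m) / 2 := by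
  have h : ((2 * k3 m : ℤ) : ℚ) = ((1 - 75 * 3 ^ m : ℤ) : ℚ) := by rw [k3_spec m]
  push_cast at h
  linarith



abbrev TT : Type :=
  zOneOver 25 (by norm_num) × zOneOver 3 (by norm_num) ×
    zOneOver 3 (by norm_num) × ℤ × ℤ

def gm (m : ℕ) : (Fin 5 → ℤ) →+ TT :=
  AddMonoidHom.mk'
    (fun x =>
      (⟨((k25 m * x 0 + 25 ^ m * (x 3 - x 4) : ℤ) : ℚ) / 25 ^ m,
          k25 m * x 0 + 25 ^ m * (x 3 - x 4), m, by push_cast; ring⟩,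
       ⟨((k3 m * x 1 + 3 ^ m * (-225 * x 0 + 225 * x 2 + x 4) : ℤ) : ℚ) / 3 ^ m,
          k3 m * x 1 + 3 ^ m * (-225 * x 0 + 225 * x 2 + x 4), m, by push_cast; ring⟩,
       ⟨((x 2 : ℤ) : ℚ) / 3 ^ m, x 2, m, by push_cast; ring⟩,
       -825 * x 0 + 2 * x 3 - 2 * x 4,
       -450 * x 0 - 75 * x 1 + 450 * x 2 + 2 * x 4))
    (by
      intro x y
      refine Prod.ext (Subtype.ext ?_) (Prod.ext (Subtype.ext ?_)
        (Prod.ext (Subtype.ext ?_) (Prod.ext ?_ ?_))) <;>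
      · simp [Pi.add_apply]
        push_cast
        ring)

lemma gm_apply (m : ℕ) (x : Fin 5 → ℤ) :
    gm m x =
      (⟨((k25 m * x 0 + 25 ^ m * (x 3 - x 4) : ℤ) : ℚ) / 25 ^ m,
          k25 m * x 0 + 25 ^ m * (x 3 - x 4), m, by push_cast; ring⟩,
       ⟨((k3 m * x 1 + 3 ^ m * (-225 * x 0 + 225 * x 2 + x 4) : ℤ) : ℚ) / 3 ^ m,
          k3 m * x 1 + 3 ^ m * (-225 * x 0 + 225 * x 2 + x 4), m, by push_cast; ring⟩,
       ⟨((x 2 : ℤ) : ℚ) / 3 ^ m, x 2, m, by push_cast; ring⟩,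
       -825 * x 0 + 2 * x 3 - 2 * x 4,
       -450 * x 0 - 75 * x 1 + 450 * x 2 + 2 * x 4) := rfl

lemma gm_step (m : ℕ) (x : Fin 5 → ℤ) : gm (m + 1) (Amap x) = gm m x := by
  rw [Amap_apply, gm_apply, gm_apply]
  have h25 : ((25:ℚ)) ≠ 0 := by norm_num
  have h3 : ((3:ℚ)) ≠ 0 := by norm_num
  refine Prod.ext (Subtype.ext ?_) (Prod.ext (Subtype.ext ?_)
    (Prod.ext (Subtype.ext ?_) (Prod.ext ?_ ?_)))
  · show ((k25 (m+1) * (25 * x 0) + 25 ^ (m+1) *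
        ((15300 * x 0 + 75 * x 1 - 450 * x 2 + x 3) -
         (5400 * x 0 + 75 * x 1 - 450 * x 2 + x 4)) : ℤ) : ℚ) / 25 ^ (m+1)
      = ((k25 m * x 0 + 25 ^ m * (x 3 - x 4) : ℤ) : ℚ) / 25 ^ m
    push_cast [k25q]
    field_simp
    ring
  · show ((k3 (m+1) * (3 * x 1) + 3 ^ (m+1) *
        (-225 * (25 * x 0) + 225 * (3 * x 2) +
         (5400 * x 0 + 75 * x 1 - 450 * x 2 + x 4)) : ℤ) : ℚ) / 3 ^ (m+1)
      = ((k3 m * x 1 + 3 ^ m * (-225 * x 0 + 225 * x 2 + x 4) : ℤ) : ℚ) / 3 ^ m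
    push_cast [k3q]
    field_simp
    ring
  · show ((3 * x 2 : ℤ) : ℚ) / 3 ^ (m+1) = ((x 2 : ℤ) : ℚ) / 3 ^ m
    push_cast
    field_simp
    ring
  · show -825 * (25 * x 0) + 2 * (15300 * x 0 + 75 * x 1 - 450 * x 2 + x 3)
        - 2 * (5400 * x 0 + 75 * x 1 - 450 * x 2 + x 4)
      = -825 * x 0 + 2 * x 3 - 2 * x 4
    ring
  · show -450 * (25 * x 0) - 75 * (3 * x 1) + 450 * (3 * x 2)
        + 2 * (5400 * x 0 + 75 * x 1 - 450 * x 2 + x 4)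
      = -450 * x 0 - 75 * x 1 + 450 * x 2 + 2 * x 4
    ring

lemma gm_pow (k : ℕ) : ∀ (i : ℕ) (x : Fin 5 → ℤ), gm (i + k) ((Amap ^ k) x) = gm i x := by
  induction k with
  | zero => intro i x; simp
  | succ k ih =>
      intro i x
      have h1 : (Amap ^ (k + 1)) x = (Amap ^ k) (Amap x) := by
        rw [pow_succ]; rfl
      have h2 : i + (k + 1) = (i + 1) + k := by omega
      rw [h1, h2, ih (i + 1) (Amap x), gm_step]

lemma gm_compat (i j : ℕ) (hij : i ≤ j) (x : Fin 5 → ℤ) :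
    gm j (iterMap Amap i j hij x) = gm i x := by
  obtain ⟨k, rfl⟩ : ∃ k, j = i + k := ⟨j - i, by omega⟩
  have : iterMap Amap i (i + k) hij x = (Amap ^ k) x := by
    show (Amap ^ (i + k - i)) x = (Amap ^ k) x
    rw [Nat.add_sub_cancel_left]
  rw [this, gm_pow]

set_option maxHeartbeats 1000000 in
lemma gm_injective (m : ℕ) : Function.Injective (gm m) := by
  rw [injective_iff_map_eq_zero]
  intro x hx
  rw [gm_apply] at hx
  rw [Prod.ext_iff, Prod.ext_iff, Prod.ext_iff, Prod.ext_iff] at hx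
  simp only [Subtype.ext_iff, Prod.fst_zero, Prod.snd_zero, ZeroMemClass.coe_zero] at hx
  obtain ⟨e0, e1, e2, e3, e4⟩ := hx
  have h25 : ((25:ℚ)) ^ m ≠ 0 := by positivity
  have h3 : ((3:ℚ)) ^ m ≠ 0 := by positivity
  have E0 : k25 m * x 0 + 25 ^ m * (x 3 - x 4) = 0 := by
    exact_mod_cast (div_eq_zero_iff.mp e0).resolve_right h25
  have E1 : k3 m * x 1 + 3 ^ m * (-225 * x 0 + 225 * x 2 + x 4) = 0 := by
    exact_mod_cast (div_eq_zero_iff.mp e1).resolve_right h3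
  have hx2 : x 2 = 0 := by
    exact_mod_cast (div_eq_zero_iff.mp e2).resolve_right h3
  have hx0 : x 0 = 0 := by
    linear_combination 2 * E0 - 25 ^ m * e3 - x 0 * k25_spec m
  have hx1 : x 1 = 0 := by
    linear_combination 2 * E1 - 3 ^ m * e4 - x 1 * k3_spec m
  have hx4 : x 4 = 0 := by
    have h : 2 * x 4 = 0 := by
      linear_combination e4 + 450 * hx0 + 75 * hx1 - 450 * hx2
    linarith
  have hx3 : x 3 = 0 := by
    have h : 2 * x 3 = 0 := by
      linear_combination e3 + 825 * hx0 + 2 * hx4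
    linarith
  funext i
  fin_cases i
  · exact hx0
  · exact hx1
  · exact hx2
  · exact hx3
  · exact hx4

lemma gm_surjective :
    ∀ t : TT, ∃ (m : ℕ) (x : Fin 5 → ℤ), gm m x = t := by
  rintro ⟨⟨q0, a, n, rfl⟩, ⟨q1, b, p, rfl⟩, ⟨q2, c, r, rfl⟩, d, e⟩
  set m := n + p + r with hm
  set x0 : ℤ := 2 * a * 25 ^ (p + r) - d * 25 ^ m with hx0
  set x1 : ℤ := 2 * b * 3 ^ (n + r) - e * 3 ^ m with hx1
  set x2 : ℤ := c * 3 ^ (n + p) with hx2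
  set x4 : ℤ := k3 m * e + 75 * b * 3 ^ (n + r) + 225 * x0 - 225 * x2 with hx4
  set x3 : ℤ := k25 m * d + 825 * a * 25 ^ (p + r) + x4 with hx3
  refine ⟨m, ![x0, x1, x2, x3, x4], ?_⟩
  rw [gm_apply]
  have h25 : ((25:ℚ)) ≠ 0 := by norm_num
  have h3 : ((3:ℚ)) ≠ 0 := by norm_num
  refine Prod.ext (Subtype.ext ?_) (Prod.ext (Subtype.ext ?_)
    (Prod.ext (Subtype.ext ?_) (Prod.ext ?_ ?_)))
  · show ((k25 m * x0 + 25 ^ m * (x3 - x4) : ℤ) : ℚ) / 25 ^ m = (a : ℚ) / ((25 : ℕ) : ℚ) ^ n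
    have hnum : k25 m * x0 + 25 ^ m * (x3 - x4) = a * 25 ^ (p + r) := by
      rw [hx0, hx3, hm]
      linear_combination (a * 25 ^ (p + r)) * k25_spec (n + p + r)
    rw [hnum, hm]
    push_cast
    rw [pow_add, pow_add]
    field_simp
    ring
  · show ((k3 m * x1 + 3 ^ m * (-225 * x0 + 225 * x2 + x4) : ℤ) : ℚ) / 3 ^ m
      = (b : ℚ) / ((3 : ℕ) : ℚ) ^ p
    have hnum : k3 m * x1 + 3 ^ m * (-225 * x0 + 225 * x2 + x4) = b * 3 ^ (n + r) := by
      rw [hx1, hx4, hm]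
      linear_combination (b * 3 ^ (n + r)) * k3_spec (n + p + r)
    rw [hnum, hm]
    push_cast
    rw [pow_add, pow_add]
    field_simp
    ring
  · show ((x2 : ℤ) : ℚ) / 3 ^ m = (c : ℚ) / ((3 : ℕ) : ℚ) ^ r
    rw [hx2, hm]
    push_cast
    rw [pow_add, pow_add]
    field_simp
    ring
  · show -825 * x0 + 2 * x3 - 2 * x4 = d
    rw [hx0, hx3, hm]
    linear_combination d * k25_spec (n + p + r)
  · show -450 * x0 - 75 * x1 + 450 * x2 + 2 * x4 = e
    rw [hx1, hx4, hm]
    linear_combination e * k3_spec (n + p + r)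


/-- The direct limit of `ℤ⁵ → ℤ⁵ → ⋯` with all connecting maps `pinwheelM` is
isomorphic to `ℤ[1/25] ⊕ ℤ[1/3]² ⊕ ℤ²`. -/
theorem directLimit_pinwheelM_iso :
    Nonempty (AddCommGroup.DirectLimit (fun _ : ℕ => (Fin 5 → ℤ))
      (iterMap (Matrix.mulVecLin pinwheelM).toAddMonoidHom) ≃+
        zOneOver 25 (by norm_num) × zOneOver 3 (by norm_num) ×
          zOneOver 3 (by norm_num) × ℤ × ℤ) := by

  refine ⟨AddEquiv.ofBijective
    (AddCommGroup.DirectLimit.lift _ _ _ gm gm_compat) ⟨?_, ?_⟩⟩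
  · exact AddCommGroup.DirectLimit.lift_injective _ gm gm_compat gm_injective
  · intro t
    obtain ⟨m, x, hx⟩ := gm_surjective t
    exact ⟨AddCommGroup.DirectLimit.of _ _ m x,
      by rw [AddCommGroup.DirectLimit.lift_of]; exact hx⟩
end
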